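/- arXiv:1110.2047 — 6 statements merged into one kernel-verified Lean document; each statement's English description precedes it below -/
import Mathlib

section
/- Let g and f be formal power series over ℂ such that g is invertible (constant term g₀ ≠ 0) and f is a delta series (f₀ = 0 and f₁ ≠ 0), and let (s_n)_{n≥0} be the Sheffer sequence for the pair (g, f), i.e., the unique sequence of polynomials satisfying ⟨g·f^k | s_n⟩ = n!·δ_{n,k} for all n, k ≥ 0. Then for every n ≥ 0, applying the operator f to s_{n+1} yields (n+1)·s_n; that is, ∑_{j≥0} f_j · s_{n+1}^{(j)}(x) = (n+1)·s_n(x), where f = ∑_{j≥0} f_j t^j and s^{(j)} denotes the j-th derivative (in umbral notation, (1/f(t))·s_n(x) = s_{n+1}(x)/(n+1)). -/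
open Polynomial

/-- The umbral pairing `⟨h | p⟩ = ∑_j j! · h_j · p_j` between a formal power series and a
polynomial (a finite sum over the support of `p`). -/
noncomputable def umbralPair (h : PowerSeries ℂ) (p : Polynomial ℂ) : ℂ :=
  ∑ j ∈ p.support, (j.factorial : ℂ) * (PowerSeries.coeff j h) * p.coeff j

/-- The action of a formal power series `h = ∑ h_j t^j` on a polynomial `p`:
`h · p = ∑_j h_j · p^{(j)}` (the sum is finite since high derivatives vanish). -/
noncomputable def umbralAct (h : PowerSeries ℂ) (p : Polynomial ℂ) : Polynomial ℂ :=
  ∑ j ∈ Finset.range (p.natDegree + 1),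
    (PowerSeries.coeff j h) • ((fun q : Polynomial ℂ => Polynomial.derivative q)^[j] p)

lemma umbralPair_eq_range (h : PowerSeries ℂ) (p : Polynomial ℂ) {N : ℕ}
    (hN : p.natDegree < N) :
    umbralPair h p =
      ∑ j ∈ Finset.range N, (j.factorial : ℂ) * (PowerSeries.coeff j h) * p.coeff j := by
  rw [umbralPair]
  apply Finset.sum_subset
  · intro j hj
    exact Finset.mem_range.2 (lt_of_le_of_lt (le_natDegree_of_mem_supp j hj) hN)
  · intro j _ hj
    rw [notMem_support_iff.1 hj, mul_zero]

lemma umbralPair_sub (h : PowerSeries ℂ) (p q : Polynomial ℂ) :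
    umbralPair h (p - q) = umbralPair h p - umbralPair h q := by
  set N := max (max (p - q).natDegree p.natDegree) q.natDegree + 1 with hN
  have b1 : (p - q).natDegree < N := by omega
  have b2 : p.natDegree < N := by omega
  have b3 : q.natDegree < N := by omega
  rw [umbralPair_eq_range h (p - q) b1, umbralPair_eq_range h p b2,
    umbralPair_eq_range h q b3, ← Finset.sum_sub_distrib]
  refine Finset.sum_congr rfl fun j _ => ?_
  rw [coeff_sub]; ring

lemma umbralPair_smul (h : PowerSeries ℂ) (c : ℂ) (p : Polynomial ℂ) :
    umbralPair h (c • p) = c * umbralPair h p := by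
  have h1 : (c • p).natDegree < p.natDegree + 1 :=
    Nat.lt_succ_of_le (natDegree_smul_le c p)
  rw [umbralPair_eq_range h (c • p) h1, umbralPair_eq_range h p (Nat.lt_succ_self _),
    Finset.mul_sum]
  refine Finset.sum_congr rfl fun j _ => ?_
  rw [coeff_smul]; simp; ring

lemma umbralPair_umbralAct (h f : PowerSeries ℂ) (p : Polynomial ℂ) :
    umbralPair h (umbralAct f p) = umbralPair (h * f) p := by
  set N := p.natDegree + 1 with hNdef
  have hdeg : (umbralAct f p).natDegree < N := by
    apply Nat.lt_succ_of_le
    apply Polynomial.natDegree_sum_le_of_forall_le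
    intro j _
    refine le_trans (natDegree_smul_le _ _) ?_
    exact le_trans (p.natDegree_iterate_derivative j) (Nat.sub_le _ _)
  set c : ℕ × ℕ → ℂ := fun ij =>
    (((ij.1 + ij.2).factorial : ℂ)) * (PowerSeries.coeff ij.1 h) *
      (PowerSeries.coeff ij.2 f) * p.coeff (ij.1 + ij.2) with hc
  have hczero : ∀ ij : ℕ × ℕ, N ≤ ij.1 + ij.2 → c ij = 0 := by
    intro ij hij
    have : p.coeff (ij.1 + ij.2) = 0 := coeff_eq_zero_of_natDegree_lt (by omega)
    simp [hc, this]
  have hLHS : umbralPair h (umbralAct f p) = ∑ ij ∈ Finset.range N ×ˢ Finset.range N, c ij := by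
    rw [umbralPair_eq_range h _ hdeg, Finset.sum_product]
    refine Finset.sum_congr rfl fun i _ => ?_
    rw [umbralAct, Polynomial.finset_sum_coeff]
    rw [Finset.mul_sum]
    refine Finset.sum_congr rfl fun j _ => ?_
    rw [coeff_smul, Polynomial.coeff_iterate_derivative]
    have hfac : (i.factorial : ℂ) * ((i + j).descFactorial j : ℂ) = ((i + j).factorial : ℂ) := by
      rw [← Nat.cast_mul]
      congr 1
      have := Nat.factorial_mul_descFactorial (n := i + j) (k := j) (by omega)
      simpa [Nat.add_sub_cancel] using this
    simp only [smul_eq_mul, nsmul_eq_mul, hc]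
    calc (i.factorial : ℂ) * PowerSeries.coeff i h *
          (PowerSeries.coeff j f * (((i + j).descFactorial j : ℂ) * p.coeff (i + j)))
        = ((i.factorial : ℂ) * ((i + j).descFactorial j : ℂ)) * PowerSeries.coeff i h *
          PowerSeries.coeff j f * p.coeff (i + j) := by ring
      _ = _ := by rw [hfac]
  have hdisj : (↑(Finset.range N) : Set ℕ).PairwiseDisjoint
      (fun m => (Finset.HasAntidiagonal.antidiagonal m : Finset (ℕ × ℕ))) := by
    intro m _ m' _ hmm'
    refine Finset.disjoint_left.2 fun ij h1 h2 => hmm' ?_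
    rw [← Finset.HasAntidiagonal.mem_antidiagonal.1 h1, Finset.HasAntidiagonal.mem_antidiagonal.1 h2]
  have hRHS : umbralPair (h * f) p = ∑ ij ∈ Finset.range N ×ˢ Finset.range N, c ij := by
    rw [umbralPair_eq_range (h * f) p (Nat.lt_succ_self _)]
    have step1 : ∀ m ∈ Finset.range N,
        (m.factorial : ℂ) * (PowerSeries.coeff m (h * f)) * p.coeff m =
          ∑ ij ∈ Finset.HasAntidiagonal.antidiagonal m, c ij := by
      intro m _
      rw [PowerSeries.coeff_mul, Finset.mul_sum, Finset.sum_mul]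
      refine Finset.sum_congr rfl fun ij hij => ?_
      have := Finset.HasAntidiagonal.mem_antidiagonal.1 hij
      simp only [hc, this]
      ring
    rw [Finset.sum_congr rfl step1, ← Finset.sum_biUnion hdisj]
    apply Finset.sum_subset
    · intro ij hij
      obtain ⟨m, hm, hijm⟩ := Finset.mem_biUnion.1 hij
      have h1 := Finset.HasAntidiagonal.mem_antidiagonal.1 hijm
      have h2 := Finset.mem_range.1 hm
      exact Finset.mem_product.2 ⟨Finset.mem_range.2 (by omega), Finset.mem_range.2 (by omega)⟩
    · intro ij hij hnot
      apply hczero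
      by_contra hlt
      push_neg at hlt
      exact hnot (Finset.mem_biUnion.2 ⟨ij.1 + ij.2, Finset.mem_range.2 hlt,
        Finset.HasAntidiagonal.mem_antidiagonal.2 rfl⟩)
  rw [hLHS, hRHS]

lemma pow_coeff_lt (f : PowerSeries ℂ) (hf0 : PowerSeries.coeff 0 f = 0) :
    ∀ n : ℕ, ∀ j < n, PowerSeries.coeff j (f ^ n) = 0 := by
  intro n
  induction n with
  | zero => intro j hj; omega
  | succ n ih =>
    intro j hj
    rw [pow_succ, PowerSeries.coeff_mul]
    apply Finset.sum_eq_zero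
    intro ij hij
    have hsum := Finset.HasAntidiagonal.mem_antidiagonal.1 hij
    rcases lt_or_ge ij.1 n with h | h
    · rw [ih _ h, zero_mul]
    · rw [show ij.2 = 0 by omega, hf0, mul_zero]

lemma pow_coeff_self (f : PowerSeries ℂ) (hf0 : PowerSeries.coeff 0 f = 0) (n : ℕ) :
    PowerSeries.coeff n (f ^ n) = (PowerSeries.coeff 1 f) ^ n := by
  induction n with
  | zero => simp
  | succ n ih =>
    rw [pow_succ, PowerSeries.coeff_mul]
    rw [Finset.sum_eq_single (n, 1)]
    · rw [ih, pow_succ]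
    · intro ij hij hne
      have hsum := Finset.HasAntidiagonal.mem_antidiagonal.1 hij
      rcases lt_or_ge ij.1 n with h | h
      · rw [pow_coeff_lt f hf0 n _ h, zero_mul]
      · have : ij.1 = n ∨ ij.1 = n + 1 := by omega
        rcases this with h1 | h1
        · exact absurd (Prod.ext h1 (by omega)) hne
        · rw [show ij.2 = 0 by omega, hf0, mul_zero]
    · intro h
      exact absurd (Finset.HasAntidiagonal.mem_antidiagonal.2 (by omega)) h

lemma umbral_injective (g f : PowerSeries ℂ)
    (hg : PowerSeries.coeff 0 g ≠ 0)
    (hf0 : PowerSeries.coeff 0 f = 0) (hf1 : PowerSeries.coeff 1 f ≠ 0)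
    (p : Polynomial ℂ) (hp : ∀ k, umbralPair (g * f ^ k) p = 0) : p = 0 := by
  by_contra h
  set n := p.natDegree with hn
  have key := hp n
  have hcoeffs : ∀ j < n, PowerSeries.coeff j (g * f ^ n) = 0 := by
    intro j hj
    rw [PowerSeries.coeff_mul]
    apply Finset.sum_eq_zero
    intro ij hij
    have hsum := Finset.HasAntidiagonal.mem_antidiagonal.1 hij
    rw [pow_coeff_lt f hf0 n ij.2 (by omega), mul_zero]
  have hcn : PowerSeries.coeff n (g * f ^ n) =
      PowerSeries.coeff 0 g * (PowerSeries.coeff 1 f) ^ n := by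
    rw [PowerSeries.coeff_mul, Finset.sum_eq_single (0, n)]
    · rw [pow_coeff_self f hf0]
    · intro ij hij hne
      have hsum := Finset.HasAntidiagonal.mem_antidiagonal.1 hij
      have : ij.2 < n := by
        rcases lt_or_ge ij.2 n with h' | h'
        · exact h'
        · exact absurd (Prod.ext (by omega) (by omega)) hne
      rw [pow_coeff_lt f hf0 n ij.2 this, mul_zero]
    · intro h'
      exact absurd (Finset.HasAntidiagonal.mem_antidiagonal.2 (by omega)) h'
  have hpn : p.coeff n ≠ 0 := by
    rw [hn, ← Polynomial.leadingCoeff]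
    exact Polynomial.leadingCoeff_ne_zero.2 h
  have hsingle : umbralPair (g * f ^ n) p =
      (n.factorial : ℂ) * (PowerSeries.coeff 0 g * (PowerSeries.coeff 1 f) ^ n) *
        p.coeff n := by
    rw [umbralPair, Finset.sum_eq_single n]
    · rw [hcn]
    · intro j hjsupp hjn
      have hle : j ≤ n := le_natDegree_of_mem_supp j hjsupp
      rw [hcoeffs j (lt_of_le_of_ne hle hjn), mul_zero, zero_mul]
    · intro hns
      exact absurd (Polynomial.mem_support_iff.2 hpn) hns
  rw [hsingle] at key
  have : (n.factorial : ℂ) ≠ 0 := Nat.cast_ne_zero.2 n.factorial_ne_zero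
  have h1 : PowerSeries.coeff 0 g * (PowerSeries.coeff 1 f) ^ n ≠ 0 :=
    mul_ne_zero hg (pow_ne_zero n hf1)
  exact hpn (by
    rcases mul_eq_zero.1 key with h2 | h2
    · exact absurd h2 (mul_ne_zero this h1)
    · exact h2)

/-- If `(s_n)` is the Sheffer sequence for the pair `(g, f)` (with `g` invertible and `f` a
delta series), then applying the operator `f` to `s_{n+1}` yields `(n+1) · s_n`. -/
theorem sheffer_delta_lowers (g f : PowerSeries ℂ)
    (hg : PowerSeries.coeff 0 g ≠ 0)
    (hf0 : PowerSeries.coeff 0 f = 0) (hf1 : PowerSeries.coeff 1 f ≠ 0)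
    (s : ℕ → Polynomial ℂ)
    (hs : ∀ n k : ℕ, umbralPair (g * f ^ k) (s n) =
      (n.factorial : ℂ) * (if n = k then 1 else 0)) :
    ∀ n : ℕ, umbralAct f (s (n + 1)) = ((n : ℂ) + 1) • s n := by
  intro n
  have hz : ∀ k, umbralPair (g * f ^ k)
      (umbralAct f (s (n + 1)) - ((n : ℂ) + 1) • s n) = 0 := by
    intro k
    rw [umbralPair_sub, umbralPair_smul, umbralPair_umbralAct,
      show g * f ^ k * f = g * f ^ (k + 1) by rw [pow_succ, mul_assoc],
      hs (n + 1) (k + 1), hs n k]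
    rcases eq_or_ne n k with h | h
    · subst h
      rw [if_pos rfl, if_pos rfl]
      push_cast [Nat.factorial_succ]; ring
    · rw [if_neg h, if_neg (by omega)]
      ring
  have := umbral_injective g f hg hf0 hf1 _ hz
  linear_combination (norm := ring_nf) this
end

section
/- For every integer n ≥ 1 and every real number c, ∫_0^c Y_{n,β}^{(v)}(u;k,a,b) du = (Y_{n+1,β}^{(v)}(c;k,a,b) − Y_{n+1,β}^{(v)}(0;k,a,b))/(n+1), where the ℂ-valued polynomial function u ↦ Y_{n,β}^{(v)}(u;k,a,b) is integrated over the real interval from 0 to c. -/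
open Polynomial

/-- The exponential generating series `e^{xt} = ∑_{n≥0} xⁿ tⁿ/n!` as a formal power series
in `t` with coefficients in `ℂ[x]`. -/
noncomputable def expX : PowerSeries (Polynomial ℂ) :=
  PowerSeries.mk fun n => (n.factorial : ℂ)⁻¹ • (Polynomial.X : Polynomial ℂ) ^ n

/-- The exponential generating series `∑_{n≥0} Y_n tⁿ/n!` of a family of polynomials. -/
noncomputable def egf (Y : ℕ → Polynomial ℂ) : PowerSeries (Polynomial ℂ) :=
  PowerSeries.mk fun n => (n.factorial : ℂ)⁻¹ • Y n

/-- The defining identity for the unified Apostol-type polynomials with general constants: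
`(B·e^t − A)^v · ∑_{n≥0} Y_n tⁿ/n! = (2^{1−k} t^k)^v · e^{xt}` as formal power series in `t`
over `ℂ[x]`. -/
def ApostolFamilyC (k v : ℕ) (B A : ℂ) (Y : ℕ → Polynomial ℂ) : Prop :=
  (PowerSeries.C (Polynomial.C B) * PowerSeries.exp (Polynomial ℂ)
      - PowerSeries.C (Polynomial.C A)) ^ v * egf Y
    = (PowerSeries.C (Polynomial.C ((2 : ℂ) ^ ((1 : ℤ) - (k : ℤ)))) *
        PowerSeries.X ^ k) ^ v * expX

/-- `Y` is the family of unified Apostol-type polynomials `Y_{n,β}^{(v)}(x;k,a,b)`: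
here `β^b = exp(b·Log β)` is the principal complex power and `a^b` the real power. -/
def ApostolFamily (k v : ℕ) (a b : ℝ) (β : ℂ) (Y : ℕ → Polynomial ℂ) : Prop :=
  ApostolFamilyC k v (β ^ (b : ℂ)) (((a ^ b : ℝ) : ℂ)) Y

/-- Coefficientwise derivative of a power series over `ℂ[x]`. -/
noncomputable def Dser (f : PowerSeries (Polynomial ℂ)) : PowerSeries (Polynomial ℂ) :=
  PowerSeries.mk fun n => Polynomial.derivative (PowerSeries.coeff n f)

/-- All coefficients are constant polynomials (in the sense that their derivative vanishes). -/
def ConstCoeffs (f : PowerSeries (Polynomial ℂ)) : Prop :=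
  ∀ i, Polynomial.derivative (PowerSeries.coeff i f) = 0

lemma ConstCoeffs.mul {g f : PowerSeries (Polynomial ℂ)} (hg : ConstCoeffs g)
    (hf : ConstCoeffs f) : ConstCoeffs (g * f) := by
  intro i
  rw [PowerSeries.coeff_mul, map_sum]
  refine Finset.sum_eq_zero fun p hp => ?_
  rw [Polynomial.derivative_mul, hg p.1, hf p.2, mul_zero, zero_mul, zero_add]

lemma ConstCoeffs.pow {g : PowerSeries (Polynomial ℂ)} (hg : ConstCoeffs g) (v : ℕ) :
    ConstCoeffs (g ^ v) := by
  induction v with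
  | zero =>
    intro i
    rw [pow_zero, PowerSeries.coeff_one]
    split <;> simp_all
  | succ m ih =>
    rw [pow_succ]; exact ih.mul hg

lemma constCoeffs_C (p : ℂ) : ConstCoeffs (PowerSeries.C (Polynomial.C p)) := by
  intro i
  rw [PowerSeries.coeff_C]
  split <;> simp_all

lemma constCoeffs_exp : ConstCoeffs (PowerSeries.exp (Polynomial ℂ)) := by
  intro i
  rw [PowerSeries.coeff_exp]
  rw [show algebraMap ℚ (Polynomial ℂ) (1 / i.factorial)
      = Polynomial.C (algebraMap ℚ ℂ (1 / i.factorial)) from rfl]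
  simp

lemma constCoeffs_X : ConstCoeffs (PowerSeries.X : PowerSeries (Polynomial ℂ)) := by
  intro i
  rw [PowerSeries.coeff_X]
  split <;> simp_all

lemma ConstCoeffs.sub {g f : PowerSeries (Polynomial ℂ)} (hg : ConstCoeffs g)
    (hf : ConstCoeffs f) : ConstCoeffs (g - f) := by
  intro i; rw [map_sub, map_sub, hg i, hf i, sub_zero]

lemma Dser_mul_of_const {g : PowerSeries (Polynomial ℂ)} (hg : ConstCoeffs g)
    (f : PowerSeries (Polynomial ℂ)) : Dser (g * f) = g * Dser f := by
  refine PowerSeries.ext fun n => ?_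
  simp only [Dser, PowerSeries.coeff_mk, PowerSeries.coeff_mul]
  rw [derivative_sum]
  refine Finset.sum_congr rfl fun p hp => ?_
  rw [Polynomial.derivative_mul, hg p.1, zero_mul, zero_add]

lemma Dser_expX : Dser expX = PowerSeries.X * expX := by
  refine PowerSeries.ext fun n => ?_
  cases n with
  | zero =>
    simp [Dser, expX]
  | succ m =>
    rw [PowerSeries.coeff_succ_X_mul]
    simp only [Dser, PowerSeries.coeff_mk, expX]
    rw [derivative_smul, Polynomial.derivative_X_pow]
    rw [Nat.add_sub_cancel, ← Polynomial.smul_eq_C_mul, smul_smul]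
    congr 1
    rw [Nat.factorial_succ]
    push_cast
    have h1 : (m.factorial : ℂ) ≠ 0 := Nat.cast_ne_zero.2 m.factorial_ne_zero
    have h2 : ((m : ℂ) + 1) ≠ 0 := Nat.cast_add_one_ne_zero m
    field_simp

lemma Dser_egf (Y : ℕ → Polynomial ℂ) :
    Dser (egf Y) = egf fun n => Polynomial.derivative (Y n) := by
  ext n
  simp [Dser, egf, derivative_smul]

lemma derivative_apostol (k v : ℕ) (B A : ℂ) (hB : B ≠ 0)
    (Y : ℕ → Polynomial ℂ) (hY : ApostolFamilyC k v B A Y) (n : ℕ) :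
    Polynomial.derivative (Y (n + 1)) = ((n : ℂ) + 1) • Y n := by
  set g : PowerSeries (Polynomial ℂ) :=
    PowerSeries.C (Polynomial.C B) * PowerSeries.exp (Polynomial ℂ)
      - PowerSeries.C (Polynomial.C A) with hgdef
  set R : PowerSeries (Polynomial ℂ) :=
    (PowerSeries.C (Polynomial.C ((2 : ℂ) ^ ((1 : ℤ) - (k : ℤ)))) *
      PowerSeries.X ^ k) ^ v with hRdef
  have hgc : ConstCoeffs g := ((constCoeffs_C B).mul constCoeffs_exp).sub (constCoeffs_C A)
  have hRc : ConstCoeffs R := (((constCoeffs_C _).mul (constCoeffs_X.pow k))).pow v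
  have hYid : g ^ v * egf Y = R * expX := hY
  -- apply Dser to both sides
  have key : g ^ v * egf (fun m => Polynomial.derivative (Y m))
      = g ^ v * (PowerSeries.X * egf Y) := by
    have h1 := congrArg Dser hYid
    rw [Dser_mul_of_const (hgc.pow v), Dser_mul_of_const hRc, Dser_expX, Dser_egf] at h1
    calc g ^ v * egf (fun m => Polynomial.derivative (Y m))
        = R * (PowerSeries.X * expX) := h1
      _ = PowerSeries.X * (R * expX) := by ring
      _ = PowerSeries.X * (g ^ v * egf Y) := by rw [hYid]
      _ = g ^ v * (PowerSeries.X * egf Y) := by ring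
  have hgne : g ^ v ≠ 0 := by
    apply pow_ne_zero
    intro h
    have : PowerSeries.coeff 1 g = 0 := by rw [h]; simp
    rw [hgdef, map_sub, PowerSeries.coeff_C_mul, PowerSeries.coeff_exp, PowerSeries.coeff_C] at this
    simp only [one_ne_zero, if_false, sub_zero] at this
    rw [show algebraMap ℚ (Polynomial ℂ) (1 / (1:ℕ).factorial)
        = Polynomial.C (algebraMap ℚ ℂ (1 / (1:ℕ).factorial)) from rfl] at this
    simp at this
    exact hB this
  have hcancel : egf (fun m => Polynomial.derivative (Y m)) = PowerSeries.X * egf Y :=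
    mul_left_cancel₀ hgne key
  have hcoeff := congrArg (PowerSeries.coeff (n + 1)) hcancel
  rw [PowerSeries.coeff_succ_X_mul] at hcoeff
  simp only [egf, PowerSeries.coeff_mk] at hcoeff
  have hfac : ((n + 1).factorial : ℂ) ≠ 0 := Nat.cast_ne_zero.2 (n + 1).factorial_ne_zero
  have := congrArg (fun p => ((n + 1).factorial : ℂ) • p) hcoeff
  simp only [smul_smul, mul_inv_cancel₀ hfac, one_smul] at this
  rw [this]
  congr 1
  rw [Nat.factorial_succ]
  push_cast
  have h1 : (n.factorial : ℂ) ≠ 0 := Nat.cast_ne_zero.2 n.factorial_ne_zero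
  field_simp

/-- Integral formula: `∫_0^c Y_{n,β}^{(v)}(u;k,a,b) du
  = (Y_{n+1,β}^{(v)}(c;k,a,b) − Y_{n+1,β}^{(v)}(0;k,a,b))/(n+1)` for `n ≥ 1`. -/
theorem apostol_integral (k v : ℕ) (a b : ℝ) (β : ℂ)
    (ha : 0 < a) (hb : 0 < b) (hβ : β ≠ 0)
    (Y : ℕ → Polynomial ℂ) (hY : ApostolFamily k v a b β Y)
    (n : ℕ) (hn : 1 ≤ n) (c : ℝ) :
    ∫ u in (0:ℝ)..c, (Y n).eval (u : ℂ)
      = ((Y (n + 1)).eval (c : ℂ) - (Y (n + 1)).eval 0) / ((n : ℂ) + 1) := by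
  have hB : (β ^ (b : ℂ)) ≠ 0 := by
    intro h
    rcases (Complex.cpow_eq_zero_iff β (b:ℂ)).1 h with ⟨h1, h2⟩
    exact hβ h1
  have hder := derivative_apostol k v _ _ hB Y hY n
  have hn1 : ((n : ℂ) + 1) ≠ 0 := Nat.cast_add_one_ne_zero n
  have hF : ∀ u ∈ Set.uIcc (0:ℝ) c,
      HasDerivAt (fun x : ℝ => (Y (n+1)).eval (x : ℂ) / ((n:ℂ) + 1)) ((Y n).eval (u : ℂ)) u := by
    intro u _
    have h1 : HasDerivAt (fun z : ℂ => (Y (n+1)).eval z)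
        ((Polynomial.derivative (Y (n+1))).eval (u : ℂ)) (u : ℂ) :=
      (Y (n+1)).hasDerivAt (u : ℂ)
    have h2 := h1.comp_ofReal
    have h3 := h2.div_const ((n:ℂ) + 1)
    refine h3.congr_deriv ?_
    rw [hder]
    simp only [eval_smul, smul_eq_mul]
    field_simp
  have hcont : IntervalIntegrable (fun u : ℝ => (Y n).eval (u : ℂ)) MeasureTheory.volume 0 c := by
    apply Continuous.intervalIntegrable
    exact ((Y n).continuous_aeval).comp Complex.continuous_ofReal
  rw [intervalIntegral.integral_eq_sub_of_hasDerivAt hF hcont]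
  push_cast
  ring
end

section
/- For all integers j ≥ 1 and n ≥ k: ∑_{m=0}^{j} C(j,m)·(−1)^{j−m}·a^{b(j−m)}·β^{bm}·Y_{n,β}(m;k,a,b) = (β^{b(j−1)}·k!/2^{k−1})·C(n,k)·∑_{l=0}^{j−1} ((j−1)!/(j−l−1)!)·(1 − a^b/β^b)^{j−l−1}·S(n−k,l), where Y_{n,β}(m;k,a,b) denotes the evaluation of the polynomial Y_{n,β}(x;k,a,b) at x = m, and β^{bm} = (β^b)^m. -/
open Polynomial

/-- The Stirling numbers of the second kind, characterized by
`l!·S(p,l) = ∑_{i=0}^{l} (−1)^{l−i}·C(l,i)·i^p`. -/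
noncomputable def stirling2 (p l : ℕ) : ℂ :=
  (l.factorial : ℂ)⁻¹ *
    ∑ i ∈ Finset.range (l + 1), (-1 : ℂ) ^ (l - i) * (l.choose i : ℂ) * (i : ℂ) ^ p

open PowerSeries Finset

lemma map_expX (m : ℂ) : PowerSeries.map (Polynomial.evalRingHom m) expX
    = PowerSeries.rescale m (PowerSeries.exp ℂ) := by
  ext n
  simp [expX, PowerSeries.coeff_rescale, PowerSeries.coeff_exp, Polynomial.smul_eval,
    mul_comm, eq_ratCast]

lemma coeff_map_egf (Y : ℕ → Polynomial ℂ) (m : ℂ) (n : ℕ) :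
    PowerSeries.coeff n (PowerSeries.map (Polynomial.evalRingHom m) (egf Y))
      = (n.factorial : ℂ)⁻¹ * (Y n).eval m := by
  simp [egf, Polynomial.smul_eval]

lemma coeff_exp_sub_one_pow (p l : ℕ) :
    PowerSeries.coeff p ((PowerSeries.exp ℂ - 1) ^ l)
      = (p.factorial : ℂ)⁻¹ * (l.factorial : ℂ) * stirling2 p l := by
  rw [sub_pow, map_sum]
  rw [stirling2]
  rw [Finset.mul_sum, Finset.mul_sum]
  refine Finset.sum_congr rfl fun i hi => ?_
  have : (PowerSeries.exp ℂ) ^ i = PowerSeries.rescale (i : ℂ) (PowerSeries.exp ℂ) :=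
    PowerSeries.exp_pow_eq_rescale_exp i
  rw [this]
  have hil : i ≤ l := Nat.lt_succ_iff.mp (Finset.mem_range.mp hi)
  have hpar : ((-1 : PowerSeries ℂ)) ^ (i + l) = PowerSeries.C ((-1 : ℂ) ^ (l - i)) := by
    rw [map_pow, map_neg, map_one]
    have : (-1 : PowerSeries ℂ) ^ (i + l) = (-1) ^ (l - i) := by
      have h2 : i + l = (l - i) + 2 * i := by omega
      rw [h2, pow_add, pow_mul]
      simp
    rw [this]
  rw [hpar, one_pow, mul_one]
  have hc : ((l.choose i : ℕ) : PowerSeries ℂ) = PowerSeries.C (l.choose i : ℂ) := by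
    simp
  push_cast
  rw [hc, mul_comm _ (PowerSeries.C ((l.choose i : ℕ) : ℂ)), ← mul_assoc]
  rw [← map_mul, PowerSeries.coeff_C_mul, PowerSeries.coeff_rescale, PowerSeries.coeff_exp]
  simp [eq_ratCast]
  push_cast
  have hfac : (l.factorial : ℂ) ≠ 0 := Nat.cast_ne_zero.mpr l.factorial_ne_zero
  have hpf : (p.factorial : ℂ) ≠ 0 := Nat.cast_ne_zero.mpr p.factorial_ne_zero
  field_simp

set_option maxHeartbeats 2000000 in
/-- For `j ≥ 1` and `n ≥ k`:
`∑_{m=0}^{j} C(j,m)(−1)^{j−m} a^{b(j−m)} β^{bm} Y_{n,β}(m;k,a,b)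
  = (β^{b(j−1)} k!/2^{k−1}) C(n,k) ∑_{l=0}^{j−1} ((j−1)!/(j−l−1)!)(1 − a^b/β^b)^{j−l−1} S(n−k,l)`. -/
theorem apostol_pairing_formula (k : ℕ) (a b : ℝ) (β : ℂ)
    (ha : 0 < a) (hb : 0 < b) (hβ : β ≠ 0)
    (Y : ℕ → Polynomial ℂ) (hY : ApostolFamily k 1 a b β Y)
    (j n : ℕ) (hj : 1 ≤ j) (hn : k ≤ n) :
    ∑ m ∈ Finset.range (j + 1),
        (j.choose m : ℂ) * (-1 : ℂ) ^ (j - m) * (((a ^ b : ℝ) : ℂ)) ^ (j - m) *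
          (β ^ (b : ℂ)) ^ m * (Y n).eval (m : ℂ)
      = (β ^ (b : ℂ)) ^ (j - 1) * (k.factorial : ℂ) / (2 : ℂ) ^ ((k : ℤ) - 1) *
          (n.choose k : ℂ) *
          ∑ l ∈ Finset.range j,
            ((j - 1).factorial : ℂ) / ((j - 1 - l).factorial : ℂ) *
              (1 - ((a ^ b : ℝ) : ℂ) / (β ^ (b : ℂ))) ^ (j - 1 - l) *
              stirling2 (n - k) l := by
  obtain ⟨j, rfl⟩ : ∃ j', j = j' + 1 := ⟨j - 1, by omega⟩
  simp only [Nat.add_sub_cancel]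
  set B : ℂ := β ^ (b : ℂ) with hBdef
  set A : ℂ := ((a ^ b : ℝ) : ℂ) with hAdef
  have hB : B ≠ 0 := by
    rw [hBdef]
    simp [Complex.cpow_eq_zero_iff, hβ]
  -- mapped defining identity, evaluated at x = m
  have key : ∀ m : ℕ,
      (PowerSeries.C B * PowerSeries.exp ℂ - PowerSeries.C A) *
          PowerSeries.map (Polynomial.evalRingHom (m : ℂ)) (egf Y)
        = PowerSeries.C ((2:ℂ) ^ ((1:ℤ) - (k:ℤ))) * PowerSeries.X ^ k *
            (PowerSeries.exp ℂ) ^ m := by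
    intro m
    have h0 : (PowerSeries.C (Polynomial.C B) * PowerSeries.exp (Polynomial ℂ)
        - PowerSeries.C (Polynomial.C A)) ^ 1 * egf Y
      = (PowerSeries.C (Polynomial.C ((2 : ℂ) ^ ((1 : ℤ) - (k : ℤ)))) *
          PowerSeries.X ^ k) ^ 1 * expX := hY
    rw [pow_one, pow_one] at h0
    have h := congrArg (PowerSeries.map (Polynomial.evalRingHom (m : ℂ))) h0
    simp only [map_mul, map_sub, map_pow, PowerSeries.map_C, PowerSeries.map_X,
      PowerSeries.map_exp, map_expX, Polynomial.coe_evalRingHom, Polynomial.eval_C] at h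
    rw [PowerSeries.exp_pow_eq_rescale_exp]
    simpa using h
  set G : PowerSeries ℂ := PowerSeries.C B * PowerSeries.exp ℂ - PowerSeries.C A with hGdef
  set c : ℂ := (2:ℂ) ^ ((1:ℤ) - (k:ℤ)) with hcdef
  have hGne : G ≠ 0 := by
    intro hzero
    have h1 := congrArg (PowerSeries.coeff 1) hzero
    rw [hGdef] at h1
    simp [PowerSeries.coeff_C_mul, PowerSeries.coeff_exp, PowerSeries.coeff_C, eq_ratCast] at h1
    exact hB h1
  -- binomial expansion of G^(j+1)
  have hbin : ∑ m ∈ Finset.range (j + 1 + 1),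
      PowerSeries.C (((j+1).choose m : ℂ) * (-1:ℂ)^(j+1-m) * A^(j+1-m) * B^m) *
        (PowerSeries.exp ℂ)^m = G ^ (j+1) := by
    rw [hGdef, sub_pow]
    refine Finset.sum_congr rfl fun m hm => ?_
    have hm' : m ≤ j + 1 := Nat.lt_succ_iff.mp (Finset.mem_range.mp hm)
    have hpar : ((-1 : PowerSeries ℂ)) ^ (m + (j+1)) = PowerSeries.C ((-1:ℂ) ^ (j+1-m)) := by
      rw [map_pow, map_neg, map_one]
      have h2 : m + (j+1) = (j+1-m) + 2*m := by omega
      rw [h2, pow_add, pow_mul]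
      simp
    rw [hpar, mul_pow]
    have hc1 : (((j+1).choose m : ℕ) : PowerSeries ℂ) = PowerSeries.C (((j+1).choose m : ℕ) : ℂ) := by
      simp
    rw [hc1, map_mul, map_mul, map_mul, map_pow, map_pow, map_pow]
    ring
  -- the main power series identity after cancelling G
  have hmain : (∑ m ∈ Finset.range (j + 1 + 1),
      PowerSeries.C (((j+1).choose m : ℂ) * (-1:ℂ)^(j+1-m) * A^(j+1-m) * B^m) *
        PowerSeries.map (Polynomial.evalRingHom (m : ℂ)) (egf Y))
      = PowerSeries.C c * PowerSeries.X ^ k * G ^ j := by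
    apply mul_left_cancel₀ hGne
    rw [Finset.mul_sum]
    calc ∑ m ∈ Finset.range (j + 1 + 1),
          G * (PowerSeries.C (((j+1).choose m : ℂ) * (-1:ℂ)^(j+1-m) * A^(j+1-m) * B^m) *
            PowerSeries.map (Polynomial.evalRingHom (m : ℂ)) (egf Y))
        = ∑ m ∈ Finset.range (j + 1 + 1),
            PowerSeries.C c * PowerSeries.X ^ k *
              (PowerSeries.C (((j+1).choose m : ℂ) * (-1:ℂ)^(j+1-m) * A^(j+1-m) * B^m) *
                (PowerSeries.exp ℂ)^m) := by
          refine Finset.sum_congr rfl fun m _ => ?_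
          rw [mul_left_comm, key m]
          ring
      _ = PowerSeries.C c * PowerSeries.X ^ k * G ^ (j+1) := by
          rw [← hbin, Finset.mul_sum]
      _ = G * (PowerSeries.C c * PowerSeries.X ^ k * G ^ j) := by
          rw [pow_succ]; ring
  -- take coefficient n
  have hcoeff := congrArg (PowerSeries.coeff n) hmain
  rw [map_sum] at hcoeff
  have hL : ∑ m ∈ Finset.range (j + 1 + 1),
      (PowerSeries.coeff n) (PowerSeries.C (((j+1).choose m : ℂ) * (-1:ℂ)^(j+1-m) * A^(j+1-m) * B^m) *
        PowerSeries.map (Polynomial.evalRingHom (m : ℂ)) (egf Y))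
      = (n.factorial : ℂ)⁻¹ * ∑ m ∈ Finset.range (j + 1 + 1),
          (((j+1).choose m : ℂ) * (-1:ℂ)^(j+1-m) * A^(j+1-m) * B^m * (Y n).eval (m:ℂ)) := by
    rw [Finset.mul_sum]
    refine Finset.sum_congr rfl fun m _ => ?_
    rw [PowerSeries.coeff_C_mul, coeff_map_egf]
    ring
  have hGalt : G = PowerSeries.C B * (PowerSeries.exp ℂ - 1) + PowerSeries.C (B - A) := by
    rw [hGdef, map_sub]
    ring
  have hGpow : (PowerSeries.coeff (n - k)) (G ^ j)
      = ∑ l ∈ Finset.range (j+1),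
          B^l * (B-A)^(j-l) * ((j.choose l : ℕ) : ℂ) *
            (((n-k).factorial : ℂ)⁻¹ * (l.factorial : ℂ) * stirling2 (n-k) l) := by
    rw [hGalt, add_pow, map_sum]
    refine Finset.sum_congr rfl fun l hl => ?_
    have hrw : (PowerSeries.C B * (PowerSeries.exp ℂ - 1))^l * (PowerSeries.C (B-A))^(j-l) *
        ((j.choose l : ℕ) : PowerSeries ℂ)
        = PowerSeries.C (B^l * (B-A)^(j-l) * ((j.choose l : ℕ):ℂ)) * (PowerSeries.exp ℂ - 1)^l := by
      have : ((j.choose l : ℕ) : PowerSeries ℂ) = PowerSeries.C ((j.choose l : ℕ):ℂ) := by simp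
      rw [this, mul_pow, map_mul, map_mul, map_pow, map_pow]
      ring
    rw [hrw, PowerSeries.coeff_C_mul, coeff_exp_sub_one_pow]
  have hR : (PowerSeries.coeff n) (PowerSeries.C c * PowerSeries.X ^ k * G ^ j)
      = c * (PowerSeries.coeff (n - k)) (G ^ j) := by
    rw [mul_assoc, PowerSeries.coeff_C_mul, PowerSeries.coeff_X_pow_mul', if_pos hn]
  rw [hL, hR, hGpow] at hcoeff
  -- final algebraic comparison
  set d : ℂ := (2:ℂ) ^ ((k:ℤ) - 1) with hddef
  have hd : d ≠ 0 := zpow_ne_zero _ two_ne_zero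
  have hcd : c = d⁻¹ := by
    rw [hcdef, hddef, ← zpow_neg]
    congr 1
    omega
  have hnfac : (n.factorial : ℂ) ≠ 0 := Nat.cast_ne_zero.mpr n.factorial_ne_zero
  apply mul_left_cancel₀ (inv_ne_zero hnfac)
  rw [hcoeff]
  rw [Finset.mul_sum]
  have hRHS : (n.factorial : ℂ)⁻¹ *
      (B ^ j * (k.factorial : ℂ) / d * ((n.choose k : ℕ) : ℂ) *
        ∑ l ∈ Finset.range (j+1),
          ((j.factorial : ℕ) : ℂ) / (((j - l).factorial : ℕ) : ℂ) * (1 - A / B) ^ (j - l) *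
            stirling2 (n - k) l)
      = ∑ l ∈ Finset.range (j+1),
          (n.factorial : ℂ)⁻¹ * (B ^ j * (k.factorial : ℂ) / d * ((n.choose k : ℕ) : ℂ) *
            (((j.factorial : ℕ) : ℂ) / (((j - l).factorial : ℕ) : ℂ) * (1 - A / B) ^ (j - l) *
              stirling2 (n - k) l)) := by
    rw [Finset.mul_sum, Finset.mul_sum]
  rw [hRHS]
  refine Finset.sum_congr rfl fun l hl => ?_
  have hlj : l ≤ j := Nat.lt_succ_iff.mp (Finset.mem_range.mp hl)
  have hBA : B - A = B * (1 - A / B) := by field_simp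
  have hBj : B ^ j = B ^ l * B ^ (j - l) := by
    rw [← pow_add]
    congr 1
    omega
  have hchj : ((j.choose l : ℕ) : ℂ) = (j.factorial : ℂ) / ((l.factorial : ℂ) * ((j-l).factorial : ℂ)) :=
    Nat.cast_choose ℂ hlj
  have hchn : ((n.choose k : ℕ) : ℂ) = (n.factorial : ℂ) / ((k.factorial : ℂ) * ((n-k).factorial : ℂ)) :=
    Nat.cast_choose ℂ hn
  have hkfac : (k.factorial : ℂ) ≠ 0 := Nat.cast_ne_zero.mpr k.factorial_ne_zero
  have hlfac : (l.factorial : ℂ) ≠ 0 := Nat.cast_ne_zero.mpr l.factorial_ne_zero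
  have hjfac : (j.factorial : ℂ) ≠ 0 := Nat.cast_ne_zero.mpr j.factorial_ne_zero
  have hjlfac : ((j-l).factorial : ℂ) ≠ 0 := Nat.cast_ne_zero.mpr (j-l).factorial_ne_zero
  have hnkfac : ((n-k).factorial : ℂ) ≠ 0 := Nat.cast_ne_zero.mpr (n-k).factorial_ne_zero
  have hBjl : (B : ℂ) ^ (j - l) ≠ 0 := pow_ne_zero _ hB
  have hw : (1 - A / B) ^ (j - l) = (B - A) ^ (j - l) / B ^ (j - l) := by
    rw [← div_pow]
    congr 1
    field_simp
  rw [hcd, hchj, hchn, hw, hBj]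
  obtain ⟨W, hW⟩ : ∃ W, B ^ (j - l) = W := ⟨_, rfl⟩
  rw [hW] at hBjl ⊢
  have hfac : ((d:ℂ) * (n.factorial:ℂ) * W * (k.factorial:ℂ) * (l.factorial:ℂ) *
      ((j-l).factorial:ℂ) * ((n-k).factorial:ℂ)) ≠ 0 := by
    simp [hd, hnfac, hBjl, hkfac, hlfac, hjlfac, hnkfac]
  apply mul_left_cancel₀ hfac
  field_simp
end

section
/- For all integers v ≥ 1 and n ≥ k, the following identity of polynomials in x holds: Y_{n,β}^{(v)}(x+1;k,a,b) = ((n)_k/(2^{k−1}·β^b))·Y_{n−k,β}^{(v−1)}(x;k,a,b) + (a^b/β^b)·Y_{n,β}^{(v)}(x;k,a,b). -/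
open Polynomial

/-- The ring hom `p ↦ p.comp (X+1)` on `ℂ[X]`. -/
noncomputable def shiftHom : Polynomial ℂ →+* Polynomial ℂ :=
  (Polynomial.aeval (Polynomial.X + 1 : Polynomial ℂ)).toRingHom

lemma shiftHom_apply (p : Polynomial ℂ) : shiftHom p = p.comp (Polynomial.X + 1) := by
  simp [shiftHom, Polynomial.aeval_def, Polynomial.comp, Polynomial.algebraMap_eq]

lemma shiftHom_C (c : ℂ) : shiftHom (Polynomial.C c) = Polynomial.C c := by
  simp [shiftHom]

lemma map_shift_exp :
    PowerSeries.map shiftHom (PowerSeries.exp (Polynomial ℂ)) = PowerSeries.exp _ := by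
  ext n
  simp [PowerSeries.coeff_map, PowerSeries.coeff_exp, Polynomial.algebraMap_apply, shiftHom_C]

lemma map_shift_egf (Y : ℕ → Polynomial ℂ) :
    PowerSeries.map shiftHom (egf Y) = egf (fun n => (Y n).comp (Polynomial.X + 1)) := by
  ext n
  simp [PowerSeries.coeff_map, egf, Polynomial.smul_eq_C_mul, shiftHom_C, shiftHom_apply]

lemma map_shift_expX :
    PowerSeries.map shiftHom expX = PowerSeries.exp (Polynomial ℂ) * expX := by
  refine PowerSeries.ext fun n => ?_
  rw [PowerSeries.coeff_map, mul_comm, PowerSeries.coeff_mul,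
    Finset.Nat.sum_antidiagonal_eq_sum_range_succ_mk]
  simp only [expX, PowerSeries.coeff_mk, PowerSeries.coeff_exp, Polynomial.smul_eq_C_mul,
    shiftHom_apply, Polynomial.mul_comp, Polynomial.C_comp, Polynomial.X_pow_comp,
    Polynomial.X_comp, Polynomial.algebraMap_apply]
  rw [add_pow, Finset.mul_sum]
  refine Finset.sum_congr rfl fun j hj => ?_
  have hjn : j ≤ n := Nat.lt_succ_iff.mp (Finset.mem_range.mp hj)
  have key : (n.factorial : ℂ)⁻¹ * (n.choose j : ℂ) =
      (j.factorial : ℂ)⁻¹ * ((n - j).factorial : ℂ)⁻¹ := by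
    have h := Nat.choose_mul_factorial_mul_factorial hjn
    have h1 : ((n - j).factorial : ℂ) ≠ 0 := Nat.cast_ne_zero.mpr (Nat.factorial_ne_zero _)
    have h2 : (j.factorial : ℂ) ≠ 0 := Nat.cast_ne_zero.mpr (Nat.factorial_ne_zero _)
    have h3 : (n.factorial : ℂ) ≠ 0 := Nat.cast_ne_zero.mpr (Nat.factorial_ne_zero _)
    field_simp
    push_cast [← h]
    ring
  have halg : (algebraMap ℚ ℂ) (1 / ((n - j).factorial : ℚ)) = ((n - j).factorial : ℂ)⁻¹ := by
    rw [eq_ratCast]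
    push_cast
    rw [one_div]
  rw [one_pow, mul_one, ← map_natCast (Polynomial.C (R := ℂ)) (n.choose j), halg,
    mul_comm ((Polynomial.X : Polynomial ℂ) ^ j), ← mul_assoc, ← Polynomial.C_mul, key,
    Polynomial.C_mul]
  ring

/-- For `v ≥ 1` and `n ≥ k`:
`Y_{n,β}^{(v)}(x+1;k,a,b) = ((n)_k/(2^{k−1} β^b))·Y_{n−k,β}^{(v−1)}(x;k,a,b)
  + (a^b/β^b)·Y_{n,β}^{(v)}(x;k,a,b)`. -/
theorem apostol_shift_identity (k v : ℕ) (a b : ℝ) (β : ℂ)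
    (ha : 0 < a) (hb : 0 < b) (hβ : β ≠ 0) (hv : 1 ≤ v)
    (Y Y' : ℕ → Polynomial ℂ)
    (hY : ApostolFamily k v a b β Y) (hY' : ApostolFamily k (v - 1) a b β Y')
    (n : ℕ) (hn : k ≤ n) :
    (Y n).comp (Polynomial.X + 1)
      = Polynomial.C ((n.descFactorial k : ℂ) /
            ((2 : ℂ) ^ ((k : ℤ) - 1) * β ^ (b : ℂ))) * Y' (n - k)
        + Polynomial.C (((a ^ b : ℝ) : ℂ) / β ^ (b : ℂ)) * Y n := by
  obtain ⟨w, rfl⟩ : ∃ w, v = w + 1 := ⟨v - 1, (Nat.succ_pred_eq_of_pos hv).symm⟩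
  set B : ℂ := β ^ (b : ℂ) with hBdef
  set A : ℂ := ((a ^ b : ℝ) : ℂ) with hAdef
  have hB : B ≠ 0 := by
    rw [hBdef, Complex.cpow_def_of_ne_zero hβ]; exact Complex.exp_ne_zero _
  set E := PowerSeries.exp (Polynomial ℂ) with hEdef
  set D : PowerSeries (Polynomial ℂ) :=
    PowerSeries.C (Polynomial.C B) * E -
      PowerSeries.C (Polynomial.C A) with hDdef
  set c : PowerSeries (Polynomial ℂ) :=
    PowerSeries.C (Polynomial.C ((2 : ℂ) ^ ((1 : ℤ) - (k : ℤ)))) with hcdef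
  have hD : D ≠ 0 := by
    intro h
    have h1 := congrArg (PowerSeries.coeff 1) h
    simp only [hDdef, map_sub, PowerSeries.coeff_C_mul, hEdef, PowerSeries.coeff_exp,
      Polynomial.algebraMap_apply, PowerSeries.coeff_C] at h1
    norm_num at h1
    exact hB h1
  have hYe : D ^ (w + 1) * egf Y = (c * PowerSeries.X ^ k) ^ (w + 1) * expX := hY
  have hY'e : D ^ w * egf Y' = (c * PowerSeries.X ^ k) ^ w * expX := by
    have : w + 1 - 1 = w := rfl
    exact this ▸ hY'
  -- Step 1: D * egf Y = c * X^k * egf Y'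
  have hE1 : D * egf Y = c * PowerSeries.X ^ k * egf Y' := by
    apply mul_left_cancel₀ (pow_ne_zero w hD)
    calc D ^ w * (D * egf Y) = D ^ (w + 1) * egf Y := by ring
      _ = (c * PowerSeries.X ^ k) ^ (w + 1) * expX := hYe
      _ = c * PowerSeries.X ^ k * ((c * PowerSeries.X ^ k) ^ w * expX) := by ring
      _ = c * PowerSeries.X ^ k * (D ^ w * egf Y') := by rw [hY'e]
      _ = D ^ w * (c * PowerSeries.X ^ k * egf Y') := by ring
  -- Step 2: egf (Y ∘ shift) = exp * egf Y
  have hmapD : PowerSeries.map shiftHom D = D := by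
    rw [hDdef, map_sub, map_mul, PowerSeries.map_C, PowerSeries.map_C, shiftHom_C, shiftHom_C,
      hEdef, map_shift_exp]
  have hE2 : egf (fun m => (Y m).comp (Polynomial.X + 1)) = E * egf Y := by
    apply mul_left_cancel₀ (pow_ne_zero (w + 1) hD)
    have h2 := congrArg (PowerSeries.map shiftHom) hYe
    rw [map_mul, map_mul, map_pow, map_pow, hmapD, map_shift_egf, map_mul, PowerSeries.map_C,
      shiftHom_C, map_pow, PowerSeries.map_X, map_shift_expX] at h2
    calc D ^ (w + 1) * egf (fun m => (Y m).comp (Polynomial.X + 1))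
        = (c * PowerSeries.X ^ k) ^ (w + 1) * (E * expX) := h2
      _ = E * ((c * PowerSeries.X ^ k) ^ (w + 1) * expX) := by ring
      _ = E * (D ^ (w + 1) * egf Y) := by rw [hYe]
      _ = D ^ (w + 1) * (E * egf Y) := by ring
  -- Step 3: combine
  have hE3 : PowerSeries.C (Polynomial.C B) *
      egf (fun m => (Y m).comp (Polynomial.X + 1))
      = c * PowerSeries.X ^ k * egf Y' +
        PowerSeries.C (Polynomial.C A) * egf Y := by
    rw [hE2, ← hE1, hDdef]; ring
  -- Step 4: extract coefficient n
  have h4 := congrArg (PowerSeries.coeff n) hE3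
  rw [map_add, PowerSeries.coeff_C_mul, PowerSeries.coeff_C_mul, hcdef, mul_assoc,
    PowerSeries.coeff_C_mul] at h4
  have hxk : (PowerSeries.coeff n) (PowerSeries.X ^ k * egf Y')
      = PowerSeries.coeff (n - k) (egf Y') := by
    conv_lhs => rw [show n = (n - k) + k from (Nat.sub_add_cancel hn).symm]
    exact PowerSeries.coeff_X_pow_mul (egf Y') k (n - k)
  rw [hxk] at h4
  simp only [egf, PowerSeries.coeff_mk, Polynomial.smul_eq_C_mul] at h4
  -- now h4 is a polynomial identity; massage constants
  have hfac : ((n - k).factorial : ℂ) * (n.descFactorial k : ℂ) = (n.factorial : ℂ) := by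
    exact_mod_cast congrArg (Nat.cast : ℕ → ℂ) (Nat.factorial_mul_descFactorial hn)
  have hnf : (n.factorial : ℂ) ≠ 0 := Nat.cast_ne_zero.mpr (Nat.factorial_ne_zero _)
  have hnkf : ((n - k).factorial : ℂ) ≠ 0 := Nat.cast_ne_zero.mpr (Nat.factorial_ne_zero _)
  have h2pow : (2 : ℂ) ^ ((1 : ℤ) - (k : ℤ)) * (2 : ℂ) ^ ((k : ℤ) - 1) = 1 := by
    rw [← zpow_add₀ (two_ne_zero (α := ℂ))]; norm_num
  have h2k : (2 : ℂ) ^ ((k : ℤ) - 1) ≠ 0 := zpow_ne_zero _ two_ne_zero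
  have e1 : B⁻¹ * (n.factorial : ℂ) * (B * (n.factorial : ℂ)⁻¹) = 1 := by
    field_simp
  have e2 : B⁻¹ * (n.factorial : ℂ) *
      ((2 : ℂ) ^ ((1 : ℤ) - (k : ℤ)) * ((n - k).factorial : ℂ)⁻¹)
      = (n.descFactorial k : ℂ) / ((2 : ℂ) ^ ((k : ℤ) - 1) * B) := by
    rw [show ((1 : ℤ) - (k : ℤ)) = -((k : ℤ) - 1) by ring, zpow_neg, ← hfac]
    field_simp
  have e3 : B⁻¹ * (n.factorial : ℂ) * (A * (n.factorial : ℂ)⁻¹) = A / B := by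
    field_simp
  rw [← mul_assoc, ← Polynomial.C_mul, ← mul_assoc, ← Polynomial.C_mul,
    ← mul_assoc, ← Polynomial.C_mul] at h4
  have hu : B * (n.factorial : ℂ)⁻¹ ≠ 0 := mul_ne_zero hB (inv_ne_zero hnf)
  have h5 := congrArg (fun p => Polynomial.C (B * (n.factorial : ℂ)⁻¹)⁻¹ * p) h4
  rw [← mul_assoc, ← Polynomial.C_mul, inv_mul_cancel₀ hu, Polynomial.C_1, one_mul, mul_add,
    ← mul_assoc, ← mul_assoc, ← Polynomial.C_mul, ← Polynomial.C_mul] at h5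
  rw [h5]
  congr 2
  · exact congrArg Polynomial.C (by rw [mul_inv, inv_inv, ← e2])
  · exact congrArg Polynomial.C (by rw [mul_inv, inv_inv, ← e3])
end

section
/- For all integers v ≥ 1 and n ≥ 0, the following recurrence holds as an identity of polynomials in x: Y_{n+1,β}^{(v)}(x;k,a,b) = (x − v)·Y_{n,β}^{(v)}(x;k,a,b) + (v·k/(n+1))·Y_{n+1,β}^{(v)}(x;k,a,b) − (v·a^b/(2^{1−k}·∏_{j=1}^{k}(n+j)))·Y_{n+k,β}^{(v+1)}(x;k,a,b), where the product over the empty range (k = 0) equals 1. -/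
open Polynomial

namespace ApostolAux

noncomputable def CK : ℂ →+* PowerSeries (Polynomial ℂ) :=
  (PowerSeries.C).comp (Polynomial.C)

lemma CK_def (z : ℂ) : PowerSeries.C (Polynomial.C z) = CK z := rfl

lemma coeff_CK_mul (z : ℂ) (f : PowerSeries (Polynomial ℂ)) (n : ℕ) :
    PowerSeries.coeff n (CK z * f)
      = Polynomial.C z * PowerSeries.coeff n f :=
  PowerSeries.coeff_C_mul n f (Polynomial.C z)

lemma CK_natCast (m : ℕ) : CK (m : ℂ) = (m : PowerSeries (Polynomial ℂ)) := by
  simp [CK, map_natCast]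

lemma fact_succ_inv (n : ℕ) : (((n+1).factorial : ℂ))⁻¹ * ((n:ℂ)+1) = ((n.factorial : ℂ))⁻¹ := by
  have h3 : ((n+1).factorial : ℂ) = ((n:ℂ)+1) * n.factorial := by
    rw [Nat.factorial_succ]; push_cast; ring
  have h2 : (n.factorial : ℂ) ≠ 0 := by exact_mod_cast n.factorial_ne_zero
  have hn1 : ((n:ℂ)+1) ≠ 0 := Nat.cast_add_one_ne_zero n
  rw [h3]
  field_simp

lemma natcast_eq_C (n : ℕ) : ((n:ℕ)+1 : Polynomial ℂ) = Polynomial.C ((n:ℂ)+1) := by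
  simp [map_add, map_natCast, map_one]

lemma dF_eq (f : PowerSeries (Polynomial ℂ)) :
    PowerSeries.derivativeFun f = PowerSeries.derivative _ f := rfl

lemma derivative_sub' (f g : PowerSeries (Polynomial ℂ)) :
    PowerSeries.derivativeFun (f - g)
      = PowerSeries.derivativeFun f - PowerSeries.derivativeFun g := by
  apply PowerSeries.ext; intro n
  simp [dF_eq, PowerSeries.coeff_derivativeFun, map_sub, sub_mul]

lemma derivative_CK_mul (z : ℂ) (f : PowerSeries (Polynomial ℂ)) :
    PowerSeries.derivativeFun (CK z * f) = CK z * PowerSeries.derivativeFun f := by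
  rw [← CK_def, ← PowerSeries.smul_eq_C_mul, PowerSeries.derivativeFun_smul,
    PowerSeries.smul_eq_C_mul, CK_def]

lemma derivative_CK (z : ℂ) : PowerSeries.derivativeFun (CK z) = 0 := by
  rw [← CK_def, dF_eq]; exact PowerSeries.derivative_C

lemma derivative_exp' :
    PowerSeries.derivativeFun (PowerSeries.exp (Polynomial ℂ))
      = PowerSeries.exp (Polynomial ℂ) := by
  apply PowerSeries.ext; intro n
  rw [dF_eq, PowerSeries.coeff_derivativeFun, PowerSeries.coeff_exp, PowerSeries.coeff_exp]
  have h0 : ((n:ℕ) + 1 : Polynomial ℂ) = algebraMap ℚ (Polynomial ℂ) ((n:ℚ)+1) := by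
    push_cast; simp
  rw [h0, ← map_mul]
  refine congrArg (algebraMap ℚ (Polynomial ℂ)) ?_
  have h3 : ((n+1).factorial : ℚ) = ((n:ℚ)+1) * n.factorial := by
    rw [Nat.factorial_succ]; push_cast; ring
  have h2 : (n.factorial : ℚ) ≠ 0 := by exact_mod_cast n.factorial_ne_zero
  have hn1 : ((n:ℚ)+1) ≠ 0 := by positivity
  rw [h3]
  field_simp

lemma derivative_expX :
    PowerSeries.derivativeFun expX = PowerSeries.C (Polynomial.X) * expX := by
  apply PowerSeries.ext; intro n
  rw [dF_eq, PowerSeries.coeff_derivativeFun, PowerSeries.coeff_C_mul]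
  simp only [expX, PowerSeries.coeff_mk]
  rw [Polynomial.smul_eq_C_mul, Polynomial.smul_eq_C_mul]
  rw [natcast_eq_C, mul_comm, ← mul_assoc, ← map_mul, mul_comm ((n:ℂ)+1), fact_succ_inv]
  ring

lemma derivative_egf (Y : ℕ → Polynomial ℂ) :
    PowerSeries.derivativeFun (egf Y) = egf (fun j => Y (j+1)) := by
  apply PowerSeries.ext; intro n
  rw [dF_eq, PowerSeries.coeff_derivativeFun]
  simp only [egf, PowerSeries.coeff_mk]
  rw [Polynomial.smul_eq_C_mul, Polynomial.smul_eq_C_mul]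
  rw [natcast_eq_C, mul_comm, ← mul_assoc, ← map_mul, mul_comm ((n:ℂ)+1), fact_succ_inv]

lemma derivative_pow_succ (f : PowerSeries (Polynomial ℂ)) (m : ℕ) :
    PowerSeries.derivativeFun (f ^ (m+1))
      = CK ((m+1 : ℕ) : ℂ) * (f ^ m * PowerSeries.derivativeFun f) := by
  induction m with
  | zero => simp [CK_natCast]
  | succ m ih =>
    rw [pow_succ, PowerSeries.derivativeFun_mul, ih]
    simp only [smul_eq_mul, CK_natCast]
    push_cast
    ring

lemma derivativeFun_X : (PowerSeries.X : PowerSeries (Polynomial ℂ)).derivativeFun = 1 := by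
  apply PowerSeries.ext; intro n
  rw [dF_eq, PowerSeries.coeff_derivativeFun]
  cases n with
  | zero => simp
  | succ n => simp [PowerSeries.coeff_X, PowerSeries.coeff_one]

lemma X_mul_derivative_pow (M : ℕ) :
    (PowerSeries.X : PowerSeries (Polynomial ℂ))
        * PowerSeries.derivativeFun (PowerSeries.X ^ M)
      = CK (M : ℂ) * PowerSeries.X ^ M := by
  cases M with
  | zero => simp [PowerSeries.derivativeFun_one, CK]
  | succ M =>
    rw [derivative_pow_succ, derivativeFun_X]
    simp only [CK_natCast, mul_one]
    push_cast
    ring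

lemma prod_fact (n k : ℕ) :
    ((n+k).factorial : ℂ) = (n.factorial : ℂ) * ∏ j ∈ Finset.range k, ((n:ℂ) + (j:ℂ) + 1) := by
  induction k with
  | zero => simp
  | succ k ih =>
    rw [Finset.prod_range_succ, ← mul_assoc, ← ih, show n + (k+1) = (n+k)+1 by ring,
      Nat.factorial_succ]
    push_cast
    ring

end ApostolAux

open ApostolAux

/-- Recurrence: for `v ≥ 1` and all `n ≥ 0`,
`Y_{n+1,β}^{(v)} = (x − v)·Y_{n,β}^{(v)} + (vk/(n+1))·Y_{n+1,β}^{(v)}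
  − (v·a^b/(2^{1−k}·∏_{j=1}^{k}(n+j)))·Y_{n+k,β}^{(v+1)}`. -/
theorem apostol_recurrence (k v : ℕ) (a b : ℝ) (β : ℂ)
    (ha : 0 < a) (hb : 0 < b) (hβ : β ≠ 0) (hv : 1 ≤ v)
    (Y Y' : ℕ → Polynomial ℂ)
    (hY : ApostolFamily k v a b β Y) (hY' : ApostolFamily k (v + 1) a b β Y')
    (n : ℕ) :
    Y (n + 1)
      = (Polynomial.X - Polynomial.C (v : ℂ)) * Y n
        + Polynomial.C ((v : ℂ) * (k : ℂ) / ((n : ℂ) + 1)) * Y (n + 1)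
        - Polynomial.C ((v : ℂ) * ((a ^ b : ℝ) : ℂ) /
            ((2 : ℂ) ^ ((1 : ℤ) - (k : ℤ)) *
              ∏ j ∈ Finset.range k, ((n : ℂ) + (j : ℂ) + 1))) * Y' (n + k) := by
  obtain ⟨m, rfl⟩ : ∃ m, v = m + 1 := ⟨v - 1, by omega⟩
  unfold ApostolFamily ApostolFamilyC at hY hY'
  rw [CK_def, CK_def, CK_def] at hY
  rw [CK_def, CK_def, CK_def] at hY'
  set A : ℂ := ((a ^ b : ℝ) : ℂ) with hA
  set c' : ℂ := (2 : ℂ) ^ ((1 : ℤ) - (k : ℤ)) with hc'def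
  set B : ℂ := β ^ (b : ℂ) with hBdef
  set F : PowerSeries (Polynomial ℂ) :=
    CK B * PowerSeries.exp (Polynomial ℂ) - CK A with hFdef
  -- nonzero constants
  have hc' : c' ≠ 0 := zpow_ne_zero _ two_ne_zero
  have hN : (n.factorial : ℂ) ≠ 0 := by exact_mod_cast n.factorial_ne_zero
  have hn1 : ((n:ℂ)+1) ≠ 0 := Nat.cast_add_one_ne_zero n
  have hM : ((n+k).factorial : ℂ) ≠ 0 := by exact_mod_cast (n+k).factorial_ne_zero
  have hP : (∏ j ∈ Finset.range k, ((n:ℂ) + (j:ℂ) + 1)) ≠ 0 := by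
    intro h
    apply hM
    rw [prod_fact n k, h, mul_zero]
  have hB : B ≠ 0 := by
    rw [hBdef, Complex.cpow_def_of_ne_zero hβ]
    exact Complex.exp_ne_zero _
  have hFne : F ≠ 0 := by
    intro h
    have h2 := congrArg (PowerSeries.coeff 1) h
    rw [hFdef, map_sub, coeff_CK_mul, PowerSeries.coeff_exp] at h2
    simp only [← CK_def, PowerSeries.coeff_C, map_zero] at h2
    have h1 : Polynomial.C B = 0 := by simpa using h2
    exact hB (Polynomial.C_eq_zero.mp h1)
  -- Step 1: F * egf Y' = G * egf Y
  have h0 : F ^ (m+1) * (F * egf Y' - (CK c' * PowerSeries.X ^ k) * egf Y) = 0 := by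
    linear_combination hY' - (CK c' * PowerSeries.X ^ k) * hY
  have hFT : F * egf Y' = (CK c' * PowerSeries.X ^ k) * egf Y := by
    rcases mul_eq_zero.mp h0 with h | h
    · exact absurd h (pow_ne_zero _ hFne)
    · exact sub_eq_zero.mp h
  -- Step 2: derivative identity
  have hdF : PowerSeries.derivativeFun F = F + CK A := by
    rw [hFdef, derivative_sub', derivative_CK_mul, derivative_exp', derivative_CK]
    ring
  have hd := congrArg PowerSeries.derivativeFun hY
  rw [PowerSeries.derivativeFun_mul, PowerSeries.derivativeFun_mul,
    derivative_pow_succ, derivative_pow_succ, derivative_CK_mul, hdF,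
    derivative_egf, derivative_expX] at hd
  simp only [smul_eq_mul] at hd
  have hdXk : (PowerSeries.X : PowerSeries (Polynomial ℂ))
      * PowerSeries.derivativeFun (PowerSeries.X ^ k)
      = CK (k : ℂ) * PowerSeries.X ^ k := X_mul_derivative_pow k
  -- Step 3: the master identity, after multiplying by F^(m+1)
  have key : F ^ (m+1) *
        (CK ((m+1 : ℕ) : ℂ) * (CK c' * (PowerSeries.X ^ (k+1) * egf Y))
          + CK ((m+1 : ℕ) : ℂ) * (CK A * (PowerSeries.X ^ 1 * egf Y'))
          + CK c' * (PowerSeries.X ^ (k+1) * egf (fun j => Y (j+1))))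
      = F ^ (m+1) *
        (CK ((m+1 : ℕ) : ℂ) * (CK (k : ℂ) * (CK c' * (PowerSeries.X ^ k * egf Y)))
          + PowerSeries.C Polynomial.X
              * (CK c' * (PowerSeries.X ^ (k+1) * egf Y))) := by
    linear_combination (PowerSeries.X * (CK c' * PowerSeries.X ^ k)) * hd
      + (CK ((m+1 : ℕ) : ℂ) * CK A * PowerSeries.X * F ^ m) * hFT
      - (CK ((m+1 : ℕ) : ℂ) * CK (k : ℂ) * (CK c' * PowerSeries.X ^ k)
          + PowerSeries.C Polynomial.X * PowerSeries.X
            * (CK c' * PowerSeries.X ^ k)) * hY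

      + (CK ((m+1 : ℕ) : ℂ) * CK c' * (CK c' * PowerSeries.X ^ k) ^ (m+1) * expX) * hdXk
  have key2 := mul_left_cancel₀ (pow_ne_zero (m+1) hFne) key
  -- Step 4: extract the coefficient of t^(n+k+1)
  have e1 : PowerSeries.coeff (n+(k+1)) (PowerSeries.X ^ (k+1) * egf Y)
      = PowerSeries.coeff n (egf Y) := PowerSeries.coeff_X_pow_mul _ (k+1) n
  have e1' : PowerSeries.coeff (n+(k+1))
        (PowerSeries.X ^ (k+1) * egf (fun j => Y (j+1)))
      = PowerSeries.coeff n (egf (fun j => Y (j+1))) :=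
    PowerSeries.coeff_X_pow_mul _ (k+1) n
  have e2 : PowerSeries.coeff (n+(k+1)) (PowerSeries.X ^ 1 * egf Y')
      = PowerSeries.coeff (n+k) (egf Y') := by
    rw [show n+(k+1) = (n+k)+1 by ring]
    exact PowerSeries.coeff_X_pow_mul _ 1 (n+k)
  have e3 : PowerSeries.coeff (n+(k+1)) (PowerSeries.X ^ k * egf Y)
      = PowerSeries.coeff (n+1) (egf Y) := by
    rw [show n+(k+1) = (n+1)+k by ring]
    exact PowerSeries.coeff_X_pow_mul _ k (n+1)
  have hco := congrArg (PowerSeries.coeff (n+(k+1))) key2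
  simp only [map_add, coeff_CK_mul, PowerSeries.coeff_C_mul] at hco
  rw [e1, e1', e2, e3] at hco
  simp only [egf, PowerSeries.coeff_mk] at hco
  -- Step 5: final scalar algebra
  rw [prod_fact n k] at hco
  rw [show (((n+1).factorial : ℕ) : ℂ) = ((n:ℂ)+1) * (n.factorial : ℂ) by
    rw [Nat.factorial_succ]; push_cast; ring] at hco
  rw [sub_mul]
  simp only [Polynomial.C_mul', smul_smul, mul_smul_comm] at hco ⊢
  linear_combination (norm := match_scalars <;> (push_cast; field_simp <;> ring))
    ((n.factorial : ℂ) / c') • hco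
end

section
/- Suppose k ≥ 1, v ≥ 1 and n ≥ v(k−1). Then the following identity of polynomials in x holds: Y_{n,β}^{(v)}(x;k,a,b) = ((n)_{v(k−1)}/(2^{v(k−1)}·a^{vb}))·ℬ_{n−v(k−1)}^{(v)}(x, β^b/a^b), where ℬ^{(v)} denotes the Apostol–Bernoulli polynomials of order v. -/
open Polynomial

/-- The defining identity for the Apostol–Bernoulli polynomials of order `v`:
`(λ·e^t − 1)^v · ∑_{n≥0} ℬ_n^{(v)}(x,λ) tⁿ/n! = t^v·e^{xt}`. -/
def ApostolBernoulliFamily (v : ℕ) (lam : ℂ) (B : ℕ → Polynomial ℂ) : Prop :=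
  (PowerSeries.C (Polynomial.C lam) * PowerSeries.exp (Polynomial ℂ) - 1) ^ v *
      egf B
    = PowerSeries.X ^ v * expX

/-- For `k ≥ 1`, `v ≥ 1` and `n ≥ v(k−1)`:
`Y_{n,β}^{(v)}(x;k,a,b) = ((n)_{v(k−1)}/(2^{v(k−1)} a^{vb})) ℬ_{n−v(k−1)}^{(v)}(x, β^b/a^b)`. -/
theorem apostol_eq_apostolBernoulli (k v : ℕ) (a b : ℝ) (β : ℂ)
    (ha : 0 < a) (hb : 0 < b) (hβ : β ≠ 0) (hk : 1 ≤ k) (hv : 1 ≤ v)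
    (Y B : ℕ → Polynomial ℂ)
    (hY : ApostolFamily k v a b β Y)
    (hB : ApostolBernoulliFamily v (β ^ (b : ℂ) / ((a ^ b : ℝ) : ℂ)) B)
    (n : ℕ) (hn : v * (k - 1) ≤ n) :
    Y n = Polynomial.C ((n.descFactorial (v * (k - 1)) : ℂ) /
        ((2 : ℂ) ^ (v * (k - 1)) * ((a ^ b : ℝ) : ℂ) ^ v)) * B (n - v * (k - 1)) := by
  set m := v * (k - 1) with hm
  set A : ℂ := ((a ^ b : ℝ) : ℂ) with hAdef
  have hA0 : A ≠ 0 := by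
    simp only [hAdef, ne_eq, Complex.ofReal_eq_zero]
    exact ne_of_gt (Real.rpow_pos_of_pos ha b)
  set lam : ℂ := β ^ (b : ℂ) / A with hlam
  have hlam0 : lam ≠ 0 := by
    apply div_ne_zero _ hA0
    rw [Complex.cpow_def_of_ne_zero hβ]
    exact Complex.exp_ne_zero _
  have hAl : A * lam = β ^ (b : ℂ) := by
    rw [hlam, mul_div_assoc', mul_div_cancel_left₀ _ hA0]
  set E := PowerSeries.exp (Polynomial ℂ) with hE
  set D := PowerSeries.C (Polynomial.C lam) * E - 1 with hD
  have hD0 : D ≠ 0 := by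
    intro h
    have h1 := congrArg (PowerSeries.coeff 1) h
    rw [hD, hE] at h1
    simp [PowerSeries.coeff_exp, PowerSeries.coeff_one, Algebra.algebraMap_eq_smul_one] at h1
    exact hlam0 h1
  have hfac : PowerSeries.C (Polynomial.C (β ^ (b:ℂ))) * E
      - PowerSeries.C (Polynomial.C A)
      = PowerSeries.C (Polynomial.C A) * D := by
    rw [hD, mul_sub, mul_one, ← mul_assoc, ← map_mul, ← map_mul, hAl]
  have hkv : k * v = m + v := by
    rw [hm]; cases k with
    | zero => omega
    | succ k' => simp [Nat.succ_sub_one]; ring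
  have key : PowerSeries.C (Polynomial.C (A ^ v)) * egf Y
      = PowerSeries.C (Polynomial.C (((2:ℂ) ^ ((1:ℤ) - (k:ℤ))) ^ v)) *
        (PowerSeries.X ^ m * egf B) := by
    have hY' := hY
    unfold ApostolFamily ApostolFamilyC at hY'
    rw [hfac] at hY'
    rw [mul_pow, mul_pow] at hY'
    rw [← pow_mul, hkv, pow_add] at hY'
    have hB' := hB
    unfold ApostolBernoulliFamily at hB'
    rw [← hE, ← hD] at hB'
    have step : (PowerSeries.C (Polynomial.C A)) ^ v * D ^ v * egf Y
        = (PowerSeries.C (Polynomial.C ((2:ℂ) ^ ((1:ℤ) - (k:ℤ))))) ^ v *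
          (PowerSeries.X ^ m * (D ^ v * egf B)) := by
      rw [hY', hB']; ring
    have hcancel : D ^ v * ((PowerSeries.C (Polynomial.C A)) ^ v * egf Y)
        = D ^ v * ((PowerSeries.C (Polynomial.C ((2:ℂ) ^ ((1:ℤ) - (k:ℤ))))) ^ v *
          (PowerSeries.X ^ m * egf B)) := by
      linear_combination step
    have hres := mul_left_cancel₀ (pow_ne_zero v hD0) hcancel
    simp only [← map_pow] at hres
    exact hres
  have hco := congrArg (PowerSeries.coeff n) key
  rw [PowerSeries.coeff_C_mul, PowerSeries.coeff_C_mul, PowerSeries.coeff_X_pow_mul'] at hco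
  rw [if_pos hn] at hco
  simp only [egf, PowerSeries.coeff_mk] at hco
  rw [Polynomial.C_mul' , Polynomial.C_mul'] at hco
  rw [smul_smul, smul_smul] at hco
  -- now : (A^v * (n!)⁻¹) • Y n = (c^v * ((n-m)!)⁻¹) • B (n-m)
  have hc : ((2:ℂ) ^ ((1:ℤ) - (k:ℤ))) ^ v = (2:ℂ) ^ v / (2:ℂ) ^ (k * v) := by
    rw [← zpow_natCast (((2:ℂ) ^ ((1:ℤ) - (k:ℤ)))) v, ← zpow_mul, sub_mul, one_mul,
      zpow_sub₀ (by norm_num : (2:ℂ) ≠ 0), ← zpow_natCast (2:ℂ) v, ← zpow_natCast (2:ℂ) (k*v)]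
    rw [Nat.cast_mul]
  have hfactn : ((n.factorial : ℂ)) ≠ 0 := by exact_mod_cast n.factorial_ne_zero
  have hfactnm : (((n - m).factorial : ℂ)) ≠ 0 := by exact_mod_cast (n - m).factorial_ne_zero
  have hdesc : ((n - m).factorial : ℂ) * (n.descFactorial m : ℂ) = (n.factorial : ℂ) := by
    exact_mod_cast congrArg (Nat.cast : ℕ → ℂ) (Nat.factorial_mul_descFactorial hn)
  rw [Polynomial.C_mul']
  have heq : ((n.descFactorial m : ℂ) / ((2:ℂ) ^ m * A ^ v))
      = (A ^ v * (n.factorial : ℂ)⁻¹)⁻¹ * (((2:ℂ) ^ ((1:ℤ) - (k:ℤ))) ^ v * ((n - m).factorial : ℂ)⁻¹) := by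
    rw [hc, hkv]
    field_simp
    rw [pow_add]
    rw [← hdesc]
    ring
  rw [heq, mul_smul, ← hco, smul_smul]
  rw [inv_mul_cancel₀ (by exact mul_ne_zero (pow_ne_zero v hA0) (inv_ne_zero hfactn)), one_smul]
end
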